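/- Let m ≥ 2. Suppose there exist constants μ > 0 and c > 0 such that for every n and every partition of the Hamming graph H(n,m) into (possibly empty) induced subgraphs H_1, …, H_m with Σ_{i=1}^{m} |V(H_i)|·ε^i ≠ 0, one has max{Δ(H_1),…,Δ(H_m)} ≥ c·n^μ. Then there exist constants μ' > 0 and c' > 0 such that for every n and every collection of (possibly empty) induced subgraphs H_{ε^0}, …, H_{ε^{m-1}} of H(n,m) whose vertex sets partition U_m^n and satisfy Σ_{k=0}^{m-1} |ρ(V(H_{ε^k}))|·ε^k ≠ 0, one has (m-1)·n − min{δ(H_{ε^k}) : 0 ≤ k ≤ m-1} ≥ c'·n^{μ'}. -/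

import Mathlib

open scoped Classical

noncomputable section

/-- The primitive `m`-th root of unity `ε = e^{2πi/m}`. -/
def primRoot (m : ℕ) : ℂ := Complex.exp (2 * Real.pi * Complex.I / m)

/-- The bijection `k ↦ ε^k` from `ZMod m` onto the set `U_m` of `m`-th roots of unity;
vectors of `U_m^n` are modelled by their exponent vectors in `(ZMod m)^n`. -/
def uRoot (m : ℕ) (k : ZMod m) : ℂ := primRoot m ^ k.val

/-- `F` represents the `m`-ary function `U_m^n → U_m` given in exponents by `g`,
i.e. the function `(ε^{x 1}, …, ε^{x n}) ↦ ε^{g x}`. -/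
def RepresentsU (m n : ℕ) (F : MvPolynomial (Fin n) ℂ)
    (g : (Fin n → ZMod m) → ZMod m) : Prop :=
  ∀ x : Fin n → ZMod m, MvPolynomial.eval (fun i => uRoot m (x i)) F = uRoot m (g x)

/-- Degree of the `m`-ary function `U_m^n → U_m` given in exponents by `g`. -/
def degU (m n : ℕ) (g : (Fin n → ZMod m) → ZMod m) : ℕ :=
  sInf {d | ∃ F : MvPolynomial (Fin n) ℂ, RepresentsU m n F g ∧ F.totalDegree = d}

/-- Local sensitivity of the `m`-ary function `U_m^n → U_m` given in exponents by `g`. -/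
def localSensU (m n : ℕ) [NeZero m] (g : (Fin n → ZMod m) → ZMod m)
    (x : Fin n → ZMod m) : ℕ :=
  (Finset.univ.filter fun y : Fin n → ZMod m => hammingDist x y = 1 ∧ g y ≠ g x).card

/-- Sensitivity of the `m`-ary function `U_m^n → U_m` given in exponents by `g`. -/
def sensU (m n : ℕ) [NeZero m] (g : (Fin n → ZMod m) → ZMod m) : ℕ :=
  Finset.univ.sup (localSensU m n g)

/-- Degree of the vertex `v` in the subgraph of the Hamming graph induced on `V`:
the number of vertices of `V` at Hamming distance exactly `1` from `v`. -/
def indDeg {ι α : Type*} [Fintype ι] (V : Finset (ι → α)) (v : ι → α) : ℕ :=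
  (V.filter fun w => hammingDist v w = 1).card

/-- Minimum degree `δ` of the subgraph of the Hamming graph induced on `V`
(it is `⊤ = +∞` for the empty graph). -/
def minDeg {ι α : Type*} [Fintype ι] (V : Finset (ι → α)) : ℕ∞ :=
  V.inf fun v => (indDeg V v : ℕ∞)

/-- Maximum degree `Δ` of the subgraph of the Hamming graph induced on `V`. -/
def maxDeg {ι α : Type*} [Fintype ι] (V : Finset (ι → α)) : ℕ :=
  V.sup fun v => indDeg V v

/-- The rotation `ρ` applied to the part `V k` of a partition of `U_m^n` (in exponent
coordinates): `x ∈ ρ(V)_k` iff `x ∈ C_{ε^j} ∩ V_{ε^{k-j}}` for some `j`, where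
`C_{ε^j}` consists of the vertices whose entries multiply to `ε^j`, i.e. whose exponents
sum to `j`. -/
def rho (m n : ℕ) [NeZero m] (V : ZMod m → Finset (Fin n → ZMod m)) (k : ZMod m) :
    Finset (Fin n → ZMod m) :=
  Finset.univ.filter fun x => x ∈ V (k - ∑ i, x i)

section Aux

variable {m n : ℕ} [NeZero m]

/-- A vector at Hamming distance 1 differs in exactly one (unique) coordinate. -/
lemma exists_unique_diff {x y : Fin n → ZMod m} (h : hammingDist x y = 1) :
    ∃ i : Fin n, x i ≠ y i ∧ ∀ j, x j ≠ y j → j = i := by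
  have h' : (Finset.univ.filter fun i => x i ≠ y i).card = 1 := h
  obtain ⟨i, hi⟩ := Finset.card_eq_one.mp h'
  refine ⟨i, ?_, ?_⟩
  · have : i ∈ Finset.univ.filter fun i => x i ≠ y i := hi ▸ Finset.mem_singleton_self i
    exact (Finset.mem_filter.mp this).2
  · intro j hj
    have : j ∈ Finset.univ.filter fun i => x i ≠ y i :=
      Finset.mem_filter.mpr ⟨Finset.mem_univ _, hj⟩
    simpa [hi] using this

/-- The number of neighbors of a vertex in the Hamming graph is at most `(m-1)*n`. -/
lemma neighbor_card_le (x : Fin n → ZMod m) :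
    (Finset.univ.filter fun y : Fin n → ZMod m => hammingDist x y = 1).card ≤ (m - 1) * n := by
  have hsub : (Finset.univ.filter fun y : Fin n → ZMod m => hammingDist x y = 1) ⊆
      Finset.univ.biUnion (fun i : Fin n =>
        ((Finset.univ : Finset (ZMod m)).erase (x i)).image (Function.update x i)) := by
    intro y hy
    have hy1 : hammingDist x y = 1 := (Finset.mem_filter.mp hy).2
    obtain ⟨i, hxi, huniq⟩ := exists_unique_diff hy1
    refine Finset.mem_biUnion.mpr ⟨i, Finset.mem_univ _, Finset.mem_image.mpr
      ⟨y i, Finset.mem_erase.mpr ⟨fun hc => hxi hc.symm, Finset.mem_univ _⟩, ?_⟩⟩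
    funext j
    by_cases hji : j = i
    · subst hji; simp
    · have hxyj : x j = y j := by
        by_contra hc
        exact hji (huniq j hc)
      simp [Function.update_of_ne hji, hxyj]
  calc (Finset.univ.filter fun y : Fin n → ZMod m => hammingDist x y = 1).card
      ≤ _ := Finset.card_le_card hsub
    _ ≤ ∑ i : Fin n,
        (((Finset.univ : Finset (ZMod m)).erase (x i)).image (Function.update x i)).card :=
        Finset.card_biUnion_le
    _ ≤ ∑ _i : Fin n, (m - 1) := by
        refine Finset.sum_le_sum fun i _ => ?_
        calc (((Finset.univ : Finset (ZMod m)).erase (x i)).image (Function.update x i)).card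
            ≤ ((Finset.univ : Finset (ZMod m)).erase (x i)).card := Finset.card_image_le
          _ = m - 1 := by
              rw [Finset.card_erase_of_mem (Finset.mem_univ _), Finset.card_univ, ZMod.card]
    _ = (m - 1) * n := by simp [mul_comm]

/-- Sums of coordinates of vectors at Hamming distance 1 differ. -/
lemma sum_ne_of_dist_one {x y : Fin n → ZMod m} (h : hammingDist x y = 1) :
    (∑ i, y i) ≠ ∑ i, x i := by
  obtain ⟨i, hxi, huniq⟩ := exists_unique_diff h
  intro hc
  have hz : (∑ j, (y j - x j)) = 0 := by
    rw [Finset.sum_sub_distrib, hc, sub_self]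
  have hsingle : (∑ j, (y j - x j)) = y i - x i := by
    refine Finset.sum_eq_single i (fun j _ hj => ?_) (by simp)
    have hxyj : x j = y j := by
      by_contra hcc
      exact hj (huniq j hcc)
    simp [hxyj]
  rw [hsingle] at hz
  exact hxi (by linear_combination -hz)

end Aux

theorem stmt18 (m : ℕ) [NeZero m] (hm : 2 ≤ m)
    (H : ∃ μ c : ℝ, 0 < μ ∧ 0 < c ∧
      ∀ (n : ℕ) (V : ZMod m → Finset (Fin n → ZMod m)),
        (∀ x : Fin n → ZMod m, ∃! k : ZMod m, x ∈ V k) →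
        (∑ k : ZMod m, ((V k).card : ℂ) * primRoot m ^ k.val) ≠ 0 →
        c * (n : ℝ) ^ μ ≤ ((Finset.univ.sup fun k : ZMod m => maxDeg (V k) : ℕ) : ℝ)) :
    ∃ μ' c' : ℝ, 0 < μ' ∧ 0 < c' ∧
      ∀ (n : ℕ) (V : ZMod m → Finset (Fin n → ZMod m)),
        (∀ x : Fin n → ZMod m, ∃! k : ZMod m, x ∈ V k) →
        (∑ k : ZMod m, ((rho m n V k).card : ℂ) * primRoot m ^ k.val) ≠ 0 →
        c' * (n : ℝ) ^ μ' ≤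
          ((((((m - 1) * n : ℕ) : ℕ∞) -
            Finset.univ.inf (fun k : ZMod m => minDeg (V k))).toNat : ℕ) : ℝ) := by
  obtain ⟨μ, c, hμ, hc, hH⟩ := H
  refine ⟨μ, c, hμ, hc, fun n V hpart hsum => ?_⟩
  set W : ZMod m → Finset (Fin n → ZMod m) := rho m n V with hW
  -- `W` is again a partition of the vertex set
  have hWpart : ∀ x : Fin n → ZMod m, ∃! k : ZMod m, x ∈ W k := by
    intro x
    obtain ⟨k, hk, huniq⟩ := hpart x
    refine ⟨k + ∑ i, x i, ?_, ?_⟩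
    · simp only [hW, rho, Finset.mem_filter, Finset.mem_univ, true_and, add_sub_cancel_right]
      exact hk
    · intro k' hk'
      simp only [hW, rho, Finset.mem_filter, Finset.mem_univ, true_and] at hk'
      have h1 := huniq _ hk'
      have := sub_eq_iff_eq_add.mp h1
      simpa [add_comm] using this
  have key := hH n W hWpart hsum
  -- the infimum of the min-degrees is finite
  set D : ℕ∞ := Finset.univ.inf (fun k : ZMod m => minDeg (V k)) with hD
  have hDle : ∀ (j : ZMod m) (x : Fin n → ZMod m), x ∈ V j → D ≤ (indDeg (V j) x : ℕ∞) := by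
    intro j x hx
    calc D ≤ minDeg (V j) := Finset.inf_le (Finset.mem_univ _)
      _ ≤ (indDeg (V j) x : ℕ∞) := Finset.inf_le hx
  have hDne : D ≠ ⊤ := by
    obtain ⟨j, hj, -⟩ := hpart (fun _ => (0 : ZMod m))
    exact ne_top_of_le_ne_top (WithTop.coe_ne_top) (hDle j _ hj)
  set d : ℕ := D.toNat with hd
  have hDd : D = (d : ℕ∞) := (ENat.coe_toNat hDne).symm
  -- the key combinatorial bound
  have hdeg : ∀ (k : ZMod m) (x : Fin n → ZMod m), x ∈ W k →
      indDeg (W k) x ≤ (m - 1) * n - d := by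
    intro k x hx
    have hxV : x ∈ V (k - ∑ i, x i) := by
      simpa [hW, rho] using hx
    set j : ZMod m := k - ∑ i, x i with hj
    -- the neighbors of x inside W k and inside V j are disjoint
    have hdisj : Disjoint ((W k).filter fun w => hammingDist x w = 1)
        ((V j).filter fun w => hammingDist x w = 1) := by
      rw [Finset.disjoint_left]
      intro y hyW hyV
      have h1 : hammingDist x y = 1 := (Finset.mem_filter.mp hyW).2
      have hyW' : y ∈ V (k - ∑ i, y i) := by
        simpa [hW, rho] using (Finset.mem_filter.mp hyW).1
      have hyV' : y ∈ V j := (Finset.mem_filter.mp hyV).1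
      obtain ⟨k₀, -, huniq⟩ := hpart y
      have e1 := huniq _ hyW'
      have e2 := huniq _ hyV'
      have : k - ∑ i, y i = k - ∑ i, x i := e1.trans (e2.symm.trans hj)
      exact sum_ne_of_dist_one h1 (sub_right_injective this)
    -- both neighbor sets sit inside the neighborhood of x
    have hsub : ((W k).filter fun w => hammingDist x w = 1) ∪
        ((V j).filter fun w => hammingDist x w = 1) ⊆
        Finset.univ.filter fun y : Fin n → ZMod m => hammingDist x y = 1 := by
      intro y hy
      rcases Finset.mem_union.mp hy with hy | hy <;>
        exact Finset.mem_filter.mpr ⟨Finset.mem_univ _, (Finset.mem_filter.mp hy).2⟩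
    have hcard : indDeg (W k) x + indDeg (V j) x ≤ (m - 1) * n := by
      have h2 := Finset.card_le_card hsub
      rw [Finset.card_union_of_disjoint hdisj] at h2
      unfold indDeg
      convert le_trans h2 (neighbor_card_le x) using 4 <;> congr!
    have hdV : d ≤ indDeg (V j) x := by
      have := hDle j x hxV
      rw [hDd] at this
      exact_mod_cast this
    omega
  -- conclude
  have hsup : (Finset.univ.sup fun k : ZMod m => maxDeg (W k)) ≤ (m - 1) * n - d := by
    refine Finset.sup_le fun k _ => ?_
    exact Finset.sup_le fun x hx => hdeg k x hx
  have hRHS : ((((m - 1) * n : ℕ) : ℕ∞) - D).toNat = (m - 1) * n - d := by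
    rw [hDd, ← ENat.coe_sub, ENat.toNat_coe]
  calc c * (n : ℝ) ^ μ ≤ _ := key
    _ ≤ (((m - 1) * n - d : ℕ) : ℝ) := by exact_mod_cast hsup
    _ = _ := by rw [hRHS]
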